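/- arXiv:2601.08801 — 2 statements merged into one kernel-verified Lean document; each statement's English description precedes it below -/
import Mathlib

section
/- Let G be a deficiency-zero reaction network that is not weakly reversible. Then for any choice of positive rate constants k, the mass-action system (G,k) admits no positive equilibrium. -/
/-- A reaction network with vertices in `ℤ_{≥0}^n` (encoded as `Fin n → ℕ`),
given by its finite set of directed edges. -/
abbrev ReactionEdges (n : ℕ) := Finset ((Fin n → ℕ) × (Fin n → ℕ))

/-- The vertex set: all sources and targets of edges. -/
noncomputable def vertexSet {n : ℕ} (E : ReactionEdges n) : Finset (Fin n → ℕ) :=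
  E.image Prod.fst ∪ E.image Prod.snd

/-- The reaction vector `y' - y ∈ ℝ^n` of an edge `y → y'`. -/
def reactionVector {n : ℕ} (e : (Fin n → ℕ) × (Fin n → ℕ)) : Fin n → ℝ :=
  fun i => (e.2 i : ℝ) - (e.1 i : ℝ)

/-- The stoichiometric subspace: the span of all reaction vectors. -/
noncomputable def stoichSubspace {n : ℕ} (E : ReactionEdges n) :
    Submodule ℝ (Fin n → ℝ) :=
  Submodule.span ℝ { v | ∃ e ∈ E, v = reactionVector e }

/-- The number of linkage classes: the number of connected components of the
underlying undirected graph on the vertex set. -/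
noncomputable def numLinkageClasses {n : ℕ} (E : ReactionEdges n) : ℕ :=
  Nat.card (Quotient (Relation.EqvGen.setoid
    (fun a b : {v // v ∈ vertexSet E} => ((a : Fin n → ℕ), (b : Fin n → ℕ)) ∈ E)))

/-- `G` is weakly reversible iff every edge lies on a directed cycle, i.e. for
every edge `y → y'` there is a directed path from `y'` back to `y`. -/
def WeaklyReversible {n : ℕ} (E : ReactionEdges n) : Prop :=
  ∀ e ∈ E, Relation.ReflTransGen (fun a b => (a, b) ∈ E) e.2 e.1

/-- The mass-action vector field `f_k(x) = ∑_{y→y'∈E} k_{y→y'} x^y (y' - y)`. -/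
noncomputable def massActionField {n : ℕ} (E : ReactionEdges n)
    (k : (Fin n → ℕ) × (Fin n → ℕ) → ℝ) (x : Fin n → ℝ) : Fin n → ℝ :=
  ∑ e ∈ E, (k e * ∏ i, x i ^ e.1 i) • reactionVector e

noncomputable section CRNAux
open Finset

variable {n : ℕ} (E : ReactionEdges n)

abbrev Vtx := {v : Fin n → ℕ // v ∈ vertexSet E}

lemma fst_mem_vertexSet {e : (Fin n → ℕ) × (Fin n → ℕ)} (he : e ∈ E) :
    e.1 ∈ vertexSet E :=
  Finset.mem_union.2 (Or.inl (Finset.mem_image_of_mem _ he))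

lemma snd_mem_vertexSet {e : (Fin n → ℕ) × (Fin n → ℕ)} (he : e ∈ E) :
    e.2 ∈ vertexSet E :=
  Finset.mem_union.2 (Or.inr (Finset.mem_image_of_mem _ he))

def embR (v : Fin n → ℕ) : Fin n → ℝ := fun i => (v i : ℝ)

def Ymap : (Vtx E → ℝ) →ₗ[ℝ] (Fin n → ℝ) where
  toFun f := ∑ v : Vtx E, f v • embR v.1
  map_add' f g := by simp [add_smul, Finset.sum_add_distrib]
  map_smul' c f := by simp [mul_smul, Finset.smul_sum]

lemma Ymap_single (v : Vtx E) : Ymap E (Pi.single v 1) = embR v.1 := by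
  simp [Ymap, Pi.single_apply, ite_smul, Finset.sum_ite_eq']

def edel (e : (Fin n → ℕ) × (Fin n → ℕ)) (he : e ∈ E) : Vtx E → ℝ :=
  Pi.single ⟨e.2, snd_mem_vertexSet E he⟩ 1 - Pi.single ⟨e.1, fst_mem_vertexSet E he⟩ 1

lemma Ymap_edel (e : (Fin n → ℕ) × (Fin n → ℕ)) (he : e ∈ E) :
    Ymap E (edel E e he) = reactionVector e := by
  rw [edel, map_sub, Ymap_single, Ymap_single]
  funext i
  simp [embR, reactionVector]

def Dspan : Submodule ℝ (Vtx E → ℝ) :=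
  Submodule.span ℝ {d | ∃ e, ∃ he : e ∈ E, d = edel E e he}

lemma map_Dspan : (Dspan E).map (Ymap E) = stoichSubspace E := by
  rw [Dspan, Submodule.map_span, stoichSubspace]
  congr 1
  ext w
  constructor
  · rintro ⟨d, ⟨e, he, rfl⟩, rfl⟩
    exact ⟨e, he, Ymap_edel E e he⟩
  · rintro ⟨e, he, rfl⟩
    exact ⟨edel E e he, ⟨e, he, rfl⟩, Ymap_edel E e he⟩

abbrev lcSetoid : Setoid (Vtx E) :=
  Relation.EqvGen.setoid
    (fun a b : Vtx E => ((a : Fin n → ℕ), (b : Fin n → ℕ)) ∈ E)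

abbrev LC := Quotient (lcSetoid E)

instance : Fintype (LC E) := Fintype.ofFinite _

lemma numLC : numLinkageClasses E = Fintype.card (LC E) :=
  Nat.card_eq_fintype_card

open Classical in
def sigmaMap : (Vtx E → ℝ) →ₗ[ℝ] (LC E → ℝ) where
  toFun f q := ∑ v : Vtx E, if Quotient.mk (lcSetoid E) v = q then f v else 0
  map_add' f g := by
    funext q
    rw [Pi.add_apply, ← Finset.sum_add_distrib]
    apply Finset.sum_congr rfl
    intro v _
    by_cases h : Quotient.mk (lcSetoid E) v = q <;> simp [h]
  map_smul' c f := by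
    funext q
    simp only [Pi.smul_apply, smul_eq_mul, RingHom.id_apply]
    rw [Finset.mul_sum]
    apply Finset.sum_congr rfl
    intro v _
    by_cases h : Quotient.mk (lcSetoid E) v = q <;> simp [h]

open Classical in
lemma sigma_single (v : Vtx E) :
    sigmaMap E (Pi.single v 1) = Pi.single (Quotient.mk (lcSetoid E) v) 1 := by
  funext q
  simp only [sigmaMap, LinearMap.coe_mk, AddHom.coe_mk]
  rw [Finset.sum_eq_single v]
  · by_cases h : Quotient.mk (lcSetoid E) v = q <;>
      simp [h, Pi.single_apply, eq_comm]
  · intro w _ hw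
    simp [Pi.single_apply, hw]
  · intro h
    exact absurd (Finset.mem_univ v) h

lemma sigma_surjective : Function.Surjective (sigmaMap E) := by
  classical
  rw [← LinearMap.range_eq_top, eq_top_iff]
  intro f _
  have hf : ∑ q : LC E, Pi.single q (f q) = f := by
    funext i
    rw [Finset.sum_apply, Fintype.sum_pi_single]
  rw [← hf]
  apply Submodule.sum_mem
  intro q _
  obtain ⟨v, rfl⟩ := Quotient.exists_rep q
  have h1 : (Pi.single (Quotient.mk (lcSetoid E) v) (f (Quotient.mk (lcSetoid E) v)) : LC E → ℝ)
      = f (Quotient.mk (lcSetoid E) v) • sigmaMap E (Pi.single v 1) := by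
    rw [sigma_single]
    funext j
    by_cases h : j = Quotient.mk (lcSetoid E) v <;> simp [Pi.single_apply, h]
  exact h1 ▸ Submodule.smul_mem _ _ (LinearMap.mem_range_self _ _)

lemma D_le_ker : Dspan E ≤ LinearMap.ker (sigmaMap E) := by
  rw [Dspan, Submodule.span_le]
  rintro d ⟨e, he, rfl⟩
  rw [SetLike.mem_coe, LinearMap.mem_ker, edel, map_sub, sigma_single, sigma_single]
  have hq : Quotient.mk (lcSetoid E) ⟨e.2, snd_mem_vertexSet E he⟩
      = Quotient.mk (lcSetoid E) ⟨e.1, fst_mem_vertexSet E he⟩ := by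
    apply Quotient.sound
    exact Relation.EqvGen.symm _ _ (Relation.EqvGen.rel _ _ he)
  rw [hq, sub_self]

end CRNAux

/-- **Deficiency-zero networks that are not weakly reversible have no positive
equilibrium.** If `G` has deficiency zero, i.e.
`|V| = ℓ + dim S_G`, and is not weakly reversible, then for every choice of
positive rate constants `k` the mass-action system `(G, k)` has no equilibrium
in the open positive orthant. -/
theorem no_positive_equilibrium_of_deficiency_zero_not_weaklyReversible
    (n : ℕ) (E : ReactionEdges n)
    (hNoLoop : ∀ e ∈ E, e.1 ≠ e.2)
    (hdef : (vertexSet E).card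
      = numLinkageClasses E + Module.finrank ℝ (stoichSubspace E))
    (hnwr : ¬ WeaklyReversible E)
    (k : (Fin n → ℕ) × (Fin n → ℕ) → ℝ) (hk : ∀ e ∈ E, 0 < k e) :
    ¬ ∃ x : Fin n → ℝ, (∀ i, 0 < x i) ∧ massActionField E k x = 0 := by
  classical
  rintro ⟨x, hx, hfx⟩
  set c : ((Fin n → ℕ) × (Fin n → ℕ)) → ℝ := fun e => k e * ∏ i, x i ^ e.1 i with hc
  have hcpos : ∀ e ∈ E, 0 < c e := fun e he =>
    mul_pos (hk e he) (Finset.prod_pos fun i _ => pow_pos (hx i) _)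
  set A : Vtx E → ℝ := ∑ e ∈ E.attach, c e.1 • edel E e.1 e.2 with hA
  have hAD : A ∈ Dspan E :=
    Submodule.sum_mem _ fun e _ =>
      Submodule.smul_mem _ _ (Submodule.subset_span ⟨e.1, e.2, rfl⟩)
  have hYA : Ymap E A = 0 := by
    rw [hA, map_sum]
    simp_rw [map_smul, Ymap_edel]
    rw [← hfx, massActionField]
    exact Finset.sum_attach E fun e => c e • reactionVector e
  -- dimension bookkeeping
  have hker : Module.finrank ℝ (LinearMap.ker (sigmaMap E))
      = Module.finrank ℝ (stoichSubspace E) := by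
    have h1 := LinearMap.finrank_range_add_finrank_ker (sigmaMap E)
    rw [LinearMap.range_eq_top.mpr (sigma_surjective E), finrank_top] at h1
    have h2 : Module.finrank ℝ (Vtx E → ℝ) = (vertexSet E).card := by
      rw [Module.finrank_pi]; exact Fintype.card_coe _
    have h3 : Module.finrank ℝ (LC E → ℝ) = numLinkageClasses E := by
      rw [Module.finrank_pi, numLC]
    omega
  have hDle : Module.finrank ℝ (Dspan E) ≤ Module.finrank ℝ (stoichSubspace E) :=
    hker ▸ Submodule.finrank_mono (D_le_ker E)
  have hDge : Module.finrank ℝ (stoichSubspace E)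
      ≤ Module.finrank ℝ (Dspan E) := by
    rw [← map_Dspan]
    exact Submodule.finrank_map_le _ _
  have hEq : Module.finrank ℝ (Dspan E)
      = Module.finrank ℝ ((Dspan E).map (Ymap E)) := by
    rw [map_Dspan]; exact le_antisymm hDle hDge
  set g : Dspan E →ₗ[ℝ] ((Dspan E).map (Ymap E)) :=
    (Ymap E).restrict (fun y hy => Submodule.mem_map_of_mem hy) with hg
  have gsurj : Function.Surjective g := by
    rintro ⟨y, d, hd, rfl⟩
    exact ⟨⟨d, hd⟩, rfl⟩
  have ginj := (LinearMap.injective_iff_surjective_of_finrank_eq_finrank hEq).2 gsurj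
  have hA0 : A = 0 := by
    have h0 : g ⟨A, hAD⟩ = g 0 := by
      rw [map_zero]
      exact Subtype.ext (by simpa [hg, LinearMap.restrict_apply] using hYA)
    exact congrArg Subtype.val (ginj h0)
  -- weak reversibility
  apply hnwr
  intro e₀ he₀
  by_contra hrt
  set R : Set (Fin n → ℕ) :=
    {v | Relation.ReflTransGen (fun a b => (a, b) ∈ E) e₀.2 v} with hR
  set F : Finset (Vtx E) := Finset.univ.filter (fun v : Vtx E => v.1 ∈ R) with hF
  have hsum : ∑ v ∈ F, A v = 0 := by rw [hA0]; simp
  have hAv : ∀ v ∈ F, A v = ∑ e ∈ E.attach, c e.1 * edel E e.1 e.2 v := by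
    intro v _
    rw [hA, Finset.sum_apply]
    rfl
  rw [Finset.sum_congr rfl hAv, Finset.sum_comm] at hsum
  have hterm : ∀ e : {e // e ∈ E}, ∑ v ∈ F, c e.1 * edel E e.1 e.2 v
      = c e.1 * ((if e.1.2 ∈ R then (1:ℝ) else 0) - (if e.1.1 ∈ R then (1:ℝ) else 0)) := by
    intro e
    rw [← Finset.mul_sum]
    congr 1
    rw [edel]
    simp only [Pi.sub_apply, Finset.sum_sub_distrib]
    rw [Finset.sum_pi_single', Finset.sum_pi_single']
    congr 1 <;> simp [hF]
  rw [Finset.sum_congr rfl (fun e _ => hterm e)] at hsum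
  have hclosed : ∀ e ∈ E, e.1 ∈ R → e.2 ∈ R := fun e he h1 => h1.tail he
  have hnonneg : ∀ e ∈ E.attach, 0 ≤ c e.1 *
      ((if e.1.2 ∈ R then (1:ℝ) else 0) - (if e.1.1 ∈ R then (1:ℝ) else 0)) := by
    intro e _
    by_cases h1 : e.1.1 ∈ R
    · rw [if_pos h1, if_pos (hclosed e.1 e.2 h1), sub_self, mul_zero]
    · rw [if_neg h1, sub_zero]
      apply mul_nonneg (hcpos e.1 e.2).le
      split <;> norm_num
  have hzero := (Finset.sum_eq_zero_iff_of_nonneg hnonneg).1 hsum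
    ⟨e₀, he₀⟩ (Finset.mem_attach _ _)
  have hzero' : c e₀ * ((if e₀.2 ∈ R then (1:ℝ) else 0)
      - (if e₀.1 ∈ R then (1:ℝ) else 0)) = 0 := hzero
  have h2 : e₀.2 ∈ R := Relation.ReflTransGen.refl
  have h1 : e₀.1 ∉ R := hrt
  rw [if_pos h2, if_neg h1, sub_zero, mul_one] at hzero'
  exact (hcpos e₀ he₀).ne' hzero'
end

section
/- Let G be a deficiency-zero reaction network that is not weakly reversible, with V ⊂ Z^n_{≥0}. Then for any positive rate constants k and any initial condition x_0 in the positive orthant whose stoichiometric compatibility class is bounded, the solution x(t) of the mass-action system satisfies liminf_{t→∞} x_i(t) = 0 for at least one index i. -/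
namespace WED


variable {n : ℕ} (E : ReactionEdges n)

lemma src_mem {e : (Fin n → ℕ) × (Fin n → ℕ)} (he : e ∈ E) : e.1 ∈ vertexSet E :=
  Finset.mem_union_left _ (Finset.mem_image_of_mem _ he)

lemma dst_mem {e : (Fin n → ℕ) × (Fin n → ℕ)} (he : e ∈ E) : e.2 ∈ vertexSet E :=
  Finset.mem_union_right _ (Finset.mem_image_of_mem _ he)

noncomputable def Phi : ({v // v ∈ vertexSet E} → ℝ) →ₗ[ℝ] (Fin n → ℝ) where
  toFun f := fun i => ∑ v : {v // v ∈ vertexSet E}, f v * ((v : Fin n → ℕ) i : ℝ)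
  map_add' f g := by funext i; simp [add_mul, Finset.sum_add_distrib]
  map_smul' c f := by funext i; simp [Finset.mul_sum, mul_assoc]

noncomputable def delta (p q : {v // v ∈ vertexSet E}) : {v // v ∈ vertexSet E} → ℝ :=
  fun v => (if v = q then 1 else 0) - (if v = p then 1 else 0)

lemma Phi_delta (p q : {v // v ∈ vertexSet E}) :
    Phi E (delta E p q) = fun i => ((q : Fin n → ℕ) i : ℝ) - ((p : Fin n → ℕ) i : ℝ) := by
  funext i
  simp [Phi, delta, sub_mul, ite_mul, Finset.sum_sub_distrib, Finset.sum_ite_eq']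

noncomputable def dotL (g : {v // v ∈ vertexSet E} → ℝ) :
    ({v // v ∈ vertexSet E} → ℝ) →ₗ[ℝ] ℝ where
  toFun f := ∑ v, f v * g v
  map_add' f g := by simp [add_mul, Finset.sum_add_distrib]
  map_smul' c f := by simp [Finset.mul_sum, mul_assoc]

lemma dotL_delta (g : {v // v ∈ vertexSet E} → ℝ) (p q : {v // v ∈ vertexSet E}) :
    dotL E g (delta E p q) = g q - g p := by
  simp [dotL, delta, sub_mul, ite_mul, Finset.sum_sub_distrib, Finset.sum_ite_eq']

noncomputable def Dsub : Submodule ℝ ({v // v ∈ vertexSet E} → ℝ) :=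
  Submodule.span ℝ
    {f | ∃ e, ∃ he : e ∈ E, f = delta E ⟨e.1, src_mem E he⟩ ⟨e.2, dst_mem E he⟩}

lemma map_Phi_D : Submodule.map (Phi E) (Dsub E) = stoichSubspace E := by
  rw [Dsub, Submodule.map_span, stoichSubspace]
  congr 1
  ext v
  constructor
  · rintro ⟨f, ⟨e, he, rfl⟩, rfl⟩
    exact ⟨e, he, by rw [Phi_delta]; rfl⟩
  · rintro ⟨e, he, rfl⟩
    exact ⟨_, ⟨e, he, rfl⟩, by rw [Phi_delta]; rfl⟩

noncomputable def qmap :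
    (Quotient (Relation.EqvGen.setoid
      (fun a b : {v // v ∈ vertexSet E} => ((a : Fin n → ℕ), (b : Fin n → ℕ)) ∈ E)) → ℝ)
    →ₗ[ℝ] ({v // v ∈ vertexSet E} → ℝ) where
  toFun g := fun v => g (Quotient.mk _ v)
  map_add' f g := rfl
  map_smul' c f := rfl

noncomputable def Csub : Submodule ℝ ({v // v ∈ vertexSet E} → ℝ) :=
  LinearMap.range (qmap E)

lemma finrank_C : Module.finrank ℝ (Csub E) = numLinkageClasses E := by
  haveI : Finite (Quotient (Relation.EqvGen.setoid
      (fun a b : {v // v ∈ vertexSet E} => ((a : Fin n → ℕ), (b : Fin n → ℕ)) ∈ E))) :=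
    Quotient.finite _
  haveI := Fintype.ofFinite (Quotient (Relation.EqvGen.setoid
      (fun a b : {v // v ∈ vertexSet E} => ((a : Fin n → ℕ), (b : Fin n → ℕ)) ∈ E)))
  have hinj : Function.Injective (qmap E) := by
    intro f g h
    funext z
    induction z using Quotient.ind with
    | _ v => exact congrFun h v
  rw [Csub, LinearMap.finrank_range_of_inj hinj, Module.finrank_pi, numLinkageClasses,
    Nat.card_eq_fintype_card]

lemma D_orth {f : {v // v ∈ vertexSet E} → ℝ} (hf : f ∈ Csub E) :
    Dsub E ≤ LinearMap.ker (dotL E f) := by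
  obtain ⟨g, rfl⟩ := hf
  rw [Dsub, Submodule.span_le]
  rintro _ ⟨e, he, rfl⟩
  have hq : (Quotient.mk _ (⟨e.1, src_mem E he⟩ : {v // v ∈ vertexSet E})
      : Quotient (Relation.EqvGen.setoid
      (fun a b : {v // v ∈ vertexSet E} => ((a : Fin n → ℕ), (b : Fin n → ℕ)) ∈ E)))
      = Quotient.mk _ ⟨e.2, dst_mem E he⟩ :=
    Quotient.sound (Relation.EqvGen.rel _ _ (by simpa using he))
  simp only [SetLike.mem_coe, LinearMap.mem_ker, dotL_delta]
  show g _ - g _ = 0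
  rw [hq, sub_self]

lemma D_inf_C : Dsub E ⊓ Csub E = ⊥ := by
  rw [eq_bot_iff]
  rintro f ⟨hfD, hfC⟩
  have h0 : ∑ v, f v * f v = 0 := D_orth E hfC hfD
  have : ∀ v ∈ Finset.univ, f v * f v = 0 := by
    rw [Finset.sum_eq_zero_iff_of_nonneg (fun v _ => mul_self_nonneg (f v))] at h0
    exact h0
  have : f = 0 := funext fun v => mul_self_eq_zero.mp (this v (Finset.mem_univ v))
  simp [this]

theorem exists_good_w
    (hdef : (vertexSet E).card
      = numLinkageClasses E + Module.finrank ℝ (stoichSubspace E))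
    {a b : Fin n → ℕ} (hab : (a, b) ∈ E)
    (hnp : ¬ Relation.ReflTransGen (fun p q => (p, q) ∈ E) b a) :
    ∃ w : Fin n → ℝ, (∀ e ∈ E, ∑ i, w i * reactionVector e i ≤ 0) ∧
      (∑ i, w i * reactionVector (a, b) i < 0) := by
  classical
  -- dimension count
  have h1 : Module.finrank ℝ (stoichSubspace E) ≤ Module.finrank ℝ (Dsub E) := by
    rw [← map_Phi_D]; exact Submodule.finrank_map_le _ _
  have h2 : Module.finrank ℝ (Dsub E) + numLinkageClasses E ≤ (vertexSet E).card := by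
    have := Submodule.finrank_sup_add_finrank_inf_eq (Dsub E) (Csub E)
    rw [D_inf_C, finrank_bot] at this
    have hle : Module.finrank ℝ (Dsub E ⊔ Csub E : Submodule ℝ _)
        ≤ (vertexSet E).card := by
      have := Submodule.finrank_le (Dsub E ⊔ Csub E)
      rwa [Module.finrank_pi, Fintype.card_coe] at this
    rw [← finrank_C E]
    omega
  have hDS : Module.finrank ℝ (Dsub E) = Module.finrank ℝ (stoichSubspace E) := by omega
  -- injectivity of Phi on D
  set ψ := (Phi E).domRestrict (Dsub E) with hψ
  have hrange : LinearMap.range ψ = stoichSubspace E := by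
    rw [hψ, LinearMap.range_domRestrict, map_Phi_D]
  have hker : LinearMap.ker ψ = ⊥ := by
    have h3 := LinearMap.finrank_range_add_finrank_ker ψ
    rw [hrange, hDS] at h3
    have : Module.finrank ℝ (LinearMap.ker ψ) = 0 := by omega
    exact Submodule.finrank_eq_zero.mp this
  have hinj : Function.Injective ψ := LinearMap.ker_eq_bot.mp hker
  -- the vertex functional
  set u : {v // v ∈ vertexSet E} → ℝ :=
    fun v => if Relation.ReflTransGen (fun p q => (p, q) ∈ E) v.1 a then 1 else 0 with hu
  -- transport to Fin n → ℝ
  set eΨ := LinearEquiv.ofInjective ψ hinj with heΨ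
  set φ : stoichSubspace E →ₗ[ℝ] ℝ :=
    (dotL E u) ∘ₗ (Dsub E).subtype ∘ₗ (eΨ.symm.toLinearMap)
      ∘ₗ (LinearEquiv.ofEq _ _ hrange.symm).toLinearMap with hφ
  have keyφ : ∀ (d : Dsub E) (hm : ψ d ∈ stoichSubspace E),
      φ ⟨ψ d, hm⟩ = dotL E u d.1 := by
    intro d hm
    have h4 : (LinearEquiv.ofEq _ _ hrange.symm) ⟨ψ d, hm⟩ = eΨ d := by
      apply Subtype.ext
      simp [heΨ, LinearEquiv.ofInjective_apply]
    rw [hφ]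
    simp only [LinearMap.coe_comp, Function.comp_apply, LinearEquiv.coe_toLinearMap]
    rw [h4]
    simp
  obtain ⟨T, hT⟩ := Submodule.exists_isCompl (stoichSubspace E)
  set P := (stoichSubspace E).linearProjOfIsCompl T hT with hP
  set W := φ ∘ₗ P with hW
  refine ⟨fun i => W (fun j => if i = j then 1 else 0), ?_, ?_⟩
  · intro e he
    have hdot : ∑ i, W (fun j => if i = j then 1 else 0) * reactionVector e i
        = W (reactionVector e) := by
      rw [LinearMap.pi_apply_eq_sum_univ W (reactionVector e)]
      simp [mul_comm]
    rw [hdot]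
    have hmemS : reactionVector e ∈ stoichSubspace E :=
      Submodule.subset_span ⟨e, he, rfl⟩
    have hWrv : W (reactionVector e) = φ ⟨reactionVector e, hmemS⟩ := by
      rw [hW]
      simp only [LinearMap.coe_comp, Function.comp_apply]
      rw [hP, Submodule.linearProjOfIsCompl, Submodule.projectionOnto_apply_left hT ⟨reactionVector e, hmemS⟩]
    set d : Dsub E := ⟨delta E ⟨e.1, src_mem E he⟩ ⟨e.2, dst_mem E he⟩,
      Submodule.subset_span ⟨e, he, rfl⟩⟩ with hd
    have hψd : ψ d = reactionVector e := by
      rw [hψ]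
      simp only [LinearMap.domRestrict_apply]
      rw [Phi_delta]
      rfl
    have : (⟨reactionVector e, hmemS⟩ : stoichSubspace E) = ⟨ψ d, hψd ▸ hmemS⟩ :=
      Subtype.ext hψd.symm
    rw [hWrv, this, keyφ]
    show dotL E u (delta E _ _) ≤ 0
    rw [dotL_delta]
    by_cases h2' : Relation.ReflTransGen (fun p q => (p, q) ∈ E) e.2 a
    · have h1' : Relation.ReflTransGen (fun p q => (p, q) ∈ E) e.1 a :=
        Relation.ReflTransGen.head (by simpa using he) h2'
      simp [hu, h1', h2']
    · simp only [hu]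
      rw [if_neg h2']
      split <;> norm_num
  · have hdot : ∑ i, W (fun j => if i = j then 1 else 0) * reactionVector (a, b) i
        = W (reactionVector (a, b)) := by
      rw [LinearMap.pi_apply_eq_sum_univ W (reactionVector (a, b))]
      simp [mul_comm]
    rw [hdot]
    have hmemS : reactionVector (a, b) ∈ stoichSubspace E :=
      Submodule.subset_span ⟨(a, b), hab, rfl⟩
    have hWrv : W (reactionVector (a, b)) = φ ⟨reactionVector (a, b), hmemS⟩ := by
      rw [hW]
      simp only [LinearMap.coe_comp, Function.comp_apply]
      rw [hP, Submodule.linearProjOfIsCompl, Submodule.projectionOnto_apply_left hT ⟨reactionVector (a, b), hmemS⟩]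
    set d : Dsub E := ⟨delta E ⟨a, src_mem E hab⟩ ⟨b, dst_mem E hab⟩,
      Submodule.subset_span ⟨(a, b), hab, rfl⟩⟩ with hd
    have hψd : ψ d = reactionVector (a, b) := by
      rw [hψ]
      simp only [LinearMap.domRestrict_apply]
      rw [Phi_delta]
      rfl
    have : (⟨reactionVector (a, b), hmemS⟩ : stoichSubspace E) = ⟨ψ d, hψd ▸ hmemS⟩ :=
      Subtype.ext hψd.symm
    rw [hWrv, this, keyφ]
    show dotL E u (delta E _ _) < 0
    rw [dotL_delta]
    have hua : u ⟨a, src_mem E hab⟩ = 1 := if_pos Relation.ReflTransGen.refl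
    have hub : u ⟨b, dst_mem E hab⟩ = 0 := if_neg hnp
    rw [hua, hub]
    norm_num



/-- positivity persistence via a Gronwall-type argument -/
lemma pos_of_deriv_ge {g g' : ℝ → ℝ} {C t1 : ℝ} (ht1 : 0 < t1)
    (hd : ∀ s ∈ Set.Icc (0:ℝ) t1, HasDerivAt g (g' s) s)
    (hineq : ∀ s ∈ Set.Icc (0:ℝ) t1, -(C * g s) ≤ g' s) (h0 : 0 < g 0) : 0 < g t1 := by
  set G := fun s => g s * Real.exp (C * s) with hG
  have hGd : ∀ s ∈ Set.Icc (0:ℝ) t1,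
      HasDerivAt G ((g' s + C * g s) * Real.exp (C * s)) s := by
    intro s hs
    have h1 : HasDerivAt (fun r => Real.exp (C * r)) (C * Real.exp (C * s)) s := by
      have := ((hasDerivAt_id s).const_mul C).exp
      simpa [mul_comm] using this
    have h2 := (hd s hs).mul h1
    exact h2.congr_deriv (by ring)
  have hmono : MonotoneOn G (Set.Icc 0 t1) := by
    apply monotoneOn_of_deriv_nonneg (convex_Icc 0 t1)
    · intro s hs
      exact ((hGd s hs).continuousAt).continuousWithinAt
    · intro s hs
      rw [interior_Icc] at hs
      exact ((hGd s (Set.Ioo_subset_Icc_self hs)).differentiableAt).differentiableWithinAt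
    · intro s hs
      rw [interior_Icc] at hs
      rw [(hGd s (Set.Ioo_subset_Icc_self hs)).deriv]
      have := hineq s (Set.Ioo_subset_Icc_self hs)
      have h3 : 0 ≤ g' s + C * g s := by linarith
      exact mul_nonneg h3 (Real.exp_pos _).le
  have hle : G 0 ≤ G t1 :=
    hmono (Set.mem_Icc.mpr ⟨le_refl 0, ht1.le⟩) (Set.mem_Icc.mpr ⟨ht1.le, le_refl t1⟩) ht1.le
  have hG0 : G 0 = g 0 := by simp [hG]
  by_contra hcon
  push_neg at hcon
  have : G t1 ≤ 0 := mul_nonpos_of_nonpos_of_nonneg hcon (Real.exp_pos _).le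
  rw [hG0] at hle
  linarith

lemma le_of_deriv_le {V V' : ℝ → ℝ} {T δ t2 : ℝ} (hT : T ≤ t2)
    (hd : ∀ s ∈ Set.Icc T t2, HasDerivAt V (V' s) s)
    (hle : ∀ s ∈ Set.Icc T t2, V' s ≤ -δ) :
    V t2 ≤ V T - δ * (t2 - T) := by
  set G := fun s => V s + δ * s with hG
  have hGd : ∀ s ∈ Set.Icc T t2, HasDerivAt G (V' s + δ) s := by
    intro s hs
    have := (hd s hs).add ((hasDerivAt_id s).const_mul δ)
    exact this.congr_deriv (by ring)
  have hanti : AntitoneOn G (Set.Icc T t2) := by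
    apply antitoneOn_of_deriv_nonpos (convex_Icc T t2)
    · intro s hs
      exact ((hGd s hs).continuousAt).continuousWithinAt
    · intro s hs
      rw [interior_Icc] at hs
      exact ((hGd s (Set.Ioo_subset_Icc_self hs)).differentiableAt).differentiableWithinAt
    · intro s hs
      rw [interior_Icc] at hs
      rw [(hGd s (Set.Ioo_subset_Icc_self hs)).deriv]
      have := hle s (Set.Ioo_subset_Icc_self hs)
      linarith
  have h := hanti (Set.mem_Icc.mpr ⟨le_refl T, hT⟩) (Set.mem_Icc.mpr ⟨hT, le_refl t2⟩) hT
  simp only [hG] at h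
  linarith

lemma prod_pow_le {n : ℕ} (z : Fin n → ℝ) (M : ℝ) (hM : 1 ≤ M)
    (hz0 : ∀ j, 0 ≤ z j) (hzM : ∀ j, z j ≤ M)
    (a : Fin n → ℕ) (i0 : Fin n) (hi : 1 ≤ a i0) :
    ∏ j, z j ^ a j ≤ z i0 * M ^ (∑ j, a j) := by
  have h1 : ∏ j, z j ^ a j
      = z i0 ^ a i0 * ∏ j ∈ Finset.univ.erase i0, z j ^ a j :=
    (Finset.mul_prod_erase _ _ (Finset.mem_univ i0)).symm
  have h2 : z i0 ^ a i0 ≤ z i0 * M ^ (a i0 - 1) := by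
    have : z i0 ^ a i0 = z i0 * z i0 ^ (a i0 - 1) := by
      rw [← pow_succ']
      congr 1
      omega
    rw [this]
    exact mul_le_mul_of_nonneg_left (pow_le_pow_left₀ (hz0 i0) (hzM i0) _) (hz0 i0)
  have h3 : ∏ j ∈ Finset.univ.erase i0, z j ^ a j
      ≤ ∏ j ∈ Finset.univ.erase i0, M ^ a j := by
    apply Finset.prod_le_prod
    · intro j _; exact pow_nonneg (hz0 j) _
    · intro j _; exact pow_le_pow_left₀ (hz0 j) (hzM j) _
  have hM0 : (0:ℝ) ≤ M := by linarith
  calc ∏ j, z j ^ a j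
      = z i0 ^ a i0 * ∏ j ∈ Finset.univ.erase i0, z j ^ a j := h1
    _ ≤ (z i0 * M ^ (a i0 - 1)) * ∏ j ∈ Finset.univ.erase i0, M ^ a j := by
        apply mul_le_mul h2 h3 (Finset.prod_nonneg fun j _ => pow_nonneg (hz0 j) _)
        exact mul_nonneg (hz0 i0) (pow_nonneg hM0 _)
    _ = z i0 * (M ^ ((a i0 - 1) + ∑ j ∈ Finset.univ.erase i0, a j)) := by
        rw [Finset.prod_pow_eq_pow_sum, mul_assoc, ← pow_add]
    _ ≤ z i0 * M ^ (∑ j, a j) := by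
        apply mul_le_mul_of_nonneg_left _ (hz0 i0)
        apply pow_le_pow_right₀ hM
        have : ∑ j, a j = a i0 + ∑ j ∈ Finset.univ.erase i0, a j :=
          (Finset.add_sum_erase _ _ (Finset.mem_univ i0)).symm
        omega

lemma field_coord_lb {n : ℕ} (E : ReactionEdges n)
    (k : (Fin n → ℕ) × (Fin n → ℕ) → ℝ) (hk : ∀ e ∈ E, 0 < k e)
    (M : ℝ) (hM : 1 ≤ M) (z : Fin n → ℝ) (hz0 : ∀ j, 0 ≤ z j) (hzM : ∀ j, z j ≤ M)
    (i0 : Fin n) :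
    -((∑ e ∈ E, k e * M ^ (∑ j, e.1 j) * (e.1 i0 : ℝ)) * z i0)
      ≤ massActionField E k z i0 := by
  have hfield : massActionField E k z i0
      = ∑ e ∈ E, (k e * ∏ j, z j ^ e.1 j) * reactionVector e i0 := by
    simp [massActionField, Finset.sum_apply]
  rw [hfield, Finset.sum_mul, ← Finset.sum_neg_distrib]
  apply Finset.sum_le_sum
  intro e he
  have hke := (hk e he).le
  have hprodnn : 0 ≤ ∏ j, z j ^ e.1 j := Finset.prod_nonneg fun j _ => pow_nonneg (hz0 j) _
  rcases le_or_gt (e.1 i0) (e.2 i0) with hcase | hcase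
  · have hrv : 0 ≤ reactionVector e i0 := by
      simp only [reactionVector, sub_nonneg]
      exact_mod_cast hcase
    have hL : -(k e * M ^ (∑ j, e.1 j) * (e.1 i0 : ℝ) * z i0) ≤ 0 := by
      apply neg_nonpos_of_nonneg
      apply mul_nonneg _ (hz0 i0)
      apply mul_nonneg (mul_nonneg hke (pow_nonneg (by linarith) _)) (Nat.cast_nonneg _)
    exact hL.trans (mul_nonneg (mul_nonneg hke hprodnn) hrv)
  · have hi : 1 ≤ e.1 i0 := by omega
    have hprod := prod_pow_le z M hM hz0 hzM e.1 i0 hi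
    have hrv : reactionVector e i0 = -((e.1 i0 : ℝ) - (e.2 i0 : ℝ)) := by
      simp [reactionVector]
    rw [hrv, mul_neg, neg_le_neg_iff]
    have hd1 : (0:ℝ) ≤ (e.1 i0 : ℝ) - (e.2 i0 : ℝ) := by
      rw [sub_nonneg]; exact_mod_cast hcase.le
    have hd2 : (e.1 i0 : ℝ) - (e.2 i0 : ℝ) ≤ (e.1 i0 : ℝ) := by
      simp only [sub_le_self_iff]; exact Nat.cast_nonneg _
    calc k e * (∏ j, z j ^ e.1 j) * ((e.1 i0 : ℝ) - (e.2 i0 : ℝ))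
        ≤ k e * (z i0 * M ^ (∑ j, e.1 j)) * (e.1 i0 : ℝ) := by
          apply mul_le_mul
          · exact mul_le_mul_of_nonneg_left hprod hke
          · exact hd2
          · exact hd1
          · exact mul_nonneg hke (mul_nonneg (hz0 i0) (pow_nonneg (by linarith) _))
      _ = k e * M ^ (∑ j, e.1 j) * (e.1 i0 : ℝ) * z i0 := by ring

lemma sum_w_field {n : ℕ} (E : ReactionEdges n)
    (k : (Fin n → ℕ) × (Fin n → ℕ) → ℝ) (w z : Fin n → ℝ) :
    ∑ i, w i * massActionField E k z i
      = ∑ e ∈ E, (k e * ∏ j, z j ^ e.1 j) * (∑ i, w i * reactionVector e i) := by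
  have h1 : ∀ i, massActionField E k z i
      = ∑ e ∈ E, (k e * ∏ j, z j ^ e.1 j) * reactionVector e i := by
    intro i; simp [massActionField, Finset.sum_apply]
  simp only [h1, Finset.mul_sum]
  rw [Finset.sum_comm]
  apply Finset.sum_congr rfl
  intro e _
  apply Finset.sum_congr rfl
  intro i _
  ring


end WED

/-- **Weak extinction for deficiency-zero, non–weakly reversible networks.**
Let `G` be a deficiency-zero reaction network (`|V| = ℓ + dim S_G`, vertices
in `ℤ_{≥0}^n`) that is not weakly reversible. Then for any positive rate
constants `k` and any initial condition `x₀` in the open positive orthant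
whose stoichiometric compatibility class `(x₀ + S_G) ∩ ℝ^n_{>0}` is bounded,
the solution `x(t)` of the mass-action system satisfies
`liminf_{t→∞} x_i(t) = 0` for at least one index `i`. -/

theorem weak_extinction_deficiency_zero (n : ℕ) (E : ReactionEdges n)
    (hNoLoop : ∀ e ∈ E, e.1 ≠ e.2)
    (hdef : (vertexSet E).card
      = numLinkageClasses E + Module.finrank ℝ (stoichSubspace E))
    (hnwr : ¬ WeaklyReversible E)
    (k : (Fin n → ℕ) × (Fin n → ℕ) → ℝ) (hk : ∀ e ∈ E, 0 < k e)
    (x0 : Fin n → ℝ) (hx0 : ∀ i, 0 < x0 i)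
    (hbdd : Bornology.IsBounded
      {x : Fin n → ℝ | (∀ i, 0 < x i) ∧ x - x0 ∈ stoichSubspace E})
    (x : ℝ → Fin n → ℝ) (hx0eq : x 0 = x0)
    (hode : ∀ t ∈ Set.Ici (0 : ℝ), HasDerivAt x (massActionField E k (x t)) t) :
    ∃ i, Filter.liminf (fun t => x t i) Filter.atTop = 0 := by
  classical
  rw [WeaklyReversible] at hnwr
  push_neg at hnwr
  obtain ⟨e0, he0, hnp⟩ := hnwr
  have hab : (e0.1, e0.2) ∈ E := by simpa using he0
  obtain ⟨w, hw1, hw2⟩ := WED.exists_good_w E hdef hab hnp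
  -- continuity and coordinatewise derivatives
  have hcont : ∀ t, 0 ≤ t → ContinuousAt x t := fun t ht => (hode t ht).continuousAt
  have hcoord : ∀ (i : Fin n), ∀ t, 0 ≤ t →
      HasDerivAt (fun s => x s i) (massActionField E k (x t) i) t := by
    intro i t ht
    exact (hasDerivAt_pi.mp (hode t ht)) i
  have hcoordCont : ∀ (i : Fin n), ∀ t, 0 ≤ t → ContinuousAt (fun s => x s i) t :=
    fun i t ht => (hcoord i t ht).continuousAt
  -- the solution stays in the affine compatibility class
  obtain ⟨T0, hT0⟩ := Submodule.exists_isCompl (stoichSubspace E)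
  set q : (Fin n → ℝ) →ₗ[ℝ] (Fin n → ℝ) :=
    T0.subtype ∘ₗ (T0.linearProjOfIsCompl _ hT0.symm) with hqdef
  have hqS : ∀ v ∈ stoichSubspace E, q v = 0 := by
    intro v hv
    show T0.subtype ((T0.linearProjOfIsCompl _ hT0.symm) v) = 0
    have h1 : (T0.linearProjOfIsCompl (stoichSubspace E) hT0.symm) v
        = (T0.linearProjOfIsCompl (stoichSubspace E) hT0.symm)
            ((⟨v, hv⟩ : stoichSubspace E) : Fin n → ℝ) := rfl
    rw [h1, Submodule.linearProjOfIsCompl, Submodule.projectionOnto_apply_right hT0.symm ⟨v, hv⟩, map_zero]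
  have hmemker : ∀ v, q v = 0 → v ∈ stoichSubspace E := by
    intro v hv
    have hsum : ((stoichSubspace E).linearProjOfIsCompl T0 hT0 v : Fin n → ℝ)
        + ((T0.linearProjOfIsCompl _ hT0.symm v : T0) : Fin n → ℝ) = v :=
      Submodule.projection_add_projection_eq_self hT0 v
    have hqv : q v = ((T0.linearProjOfIsCompl _ hT0.symm v : T0) : Fin n → ℝ) := rfl
    rw [hqv] at hv
    rw [hv, add_zero] at hsum
    rw [← hsum]
    exact Submodule.coe_mem _
  set qc := LinearMap.toContinuousLinearMap q with hqc
  have hqcq : ∀ v, qc v = q v := fun v => rfl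
  have hfieldS : ∀ z, massActionField E k z ∈ stoichSubspace E := by
    intro z
    apply Submodule.sum_mem
    intro e he
    exact Submodule.smul_mem _ _ (Submodule.subset_span ⟨e, he, rfl⟩)
  have hclass : ∀ t, 0 ≤ t → x t - x0 ∈ stoichSubspace E := by
    intro t ht
    have hconst : ∀ s ∈ Set.Icc (0:ℝ) t, (fun r => qc (x r)) s = (fun r => qc (x r)) 0 := by
      apply constant_of_has_deriv_right_zero
      · intro s hs
        exact (qc.continuous.continuousAt.comp (hcont s hs.1)).continuousWithinAt
      · intro s hs
        have hd : HasDerivAt (fun r => qc (x r)) (qc (massActionField E k (x s))) s :=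
          qc.hasFDerivAt.comp_hasDerivAt s (hode s (Set.mem_Ici.mpr hs.1))
        have h0 : qc (massActionField E k (x s)) = 0 := by
          rw [hqcq]
          exact hqS _ (hfieldS _)
        rw [h0] at hd
        exact hd.hasDerivWithinAt
    have hct := hconst t (Set.mem_Icc.mpr ⟨ht, le_refl t⟩)
    simp only [hx0eq] at hct
    apply hmemker
    rw [map_sub, ← hqcq, ← hqcq, hct, sub_self]
  -- coordinate bound from boundedness of the class
  obtain ⟨M0, hM0⟩ := isBounded_iff_forall_norm_le.mp hbdd
  set M := max M0 1 with hM
  have hM1 : (1:ℝ) ≤ M := le_max_right _ _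
  have hMB : ∀ z : Fin n → ℝ, (∀ i, 0 < z i) → z - x0 ∈ stoichSubspace E →
      ∀ i, z i ≤ M := by
    intro z hz1 hz2 i
    have h1 := hM0 z ⟨hz1, hz2⟩
    have h2 := norm_le_pi_norm z i
    rw [Real.norm_eq_abs] at h2
    calc z i ≤ |z i| := le_abs_self _
      _ ≤ M0 := h2.trans h1
      _ ≤ M := le_max_left _ _
  -- positivity of the solution for all time
  have hpos : ∀ t, 0 ≤ t → ∀ i, 0 < x t i := by
    by_contra hcon
    push_neg at hcon
    obtain ⟨tb, htb0, ib, hib⟩ := hcon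
    set bad := {t : ℝ | 0 ≤ t ∧ ∃ i, x t i ≤ 0} with hbad
    have hne : bad.Nonempty := ⟨tb, htb0, ib, hib⟩
    have hbb : BddBelow bad := ⟨0, fun t ht => ht.1⟩
    set t1 := sInf bad with ht1
    have ht1nn : 0 ≤ t1 := le_csInf hne fun t ht => ht.1
    have hpre : ∀ s, 0 ≤ s → s < t1 → ∀ i, 0 < x s i := by
      intro s hs hst i
      by_contra h
      push_neg at h
      exact absurd (csInf_le hbb ⟨hs, i, h⟩) (not_le.mpr hst)
    have ht1pos : 0 < t1 := by
      have hev : ∀ᶠ s in nhds 0, ∀ i, 0 < x s i := by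
        rw [Filter.eventually_all]
        intro i
        have hx0i : 0 < x 0 i := by rw [hx0eq]; exact hx0 i
        exact Filter.Tendsto.eventually_const_lt hx0i (hcoordCont i 0 le_rfl)
      obtain ⟨ε, hε, hball⟩ := Metric.eventually_nhds_iff.mp hev
      have hhalf : ε / 2 ≤ t1 := by
        apply le_csInf hne
        intro t ht
        by_contra hlt
        push_neg at hlt
        have hd : dist t 0 < ε := by
          rw [Real.dist_eq, sub_zero, abs_of_nonneg ht.1]
          linarith
        obtain ⟨i, hi⟩ := ht.2
        exact absurd (hball hd i) (not_lt.mpr hi)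
      linarith
    have hbnd : ∀ s, 0 ≤ s → s ≤ t1 → ∀ i, 0 ≤ x s i ∧ x s i ≤ M := by
      intro s hs hst
      rcases lt_or_eq_of_le hst with hlt | heq
      · intro i
        have h1 := hpre s hs hlt
        have h2 := hMB (x s) h1 (hclass s hs)
        exact ⟨(h1 i).le, h2 i⟩
      · intro i
        rw [heq]
        have htd : Filter.Tendsto (fun r => x r i) (nhdsWithin t1 (Set.Iio t1))
            (nhds (x t1 i)) := (hcoordCont i t1 ht1nn).continuousWithinAt
        have hevp : ∀ᶠ r in nhdsWithin t1 (Set.Iio t1), 0 < r ∧ r < t1 := by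
          have h1 : ∀ᶠ r in nhdsWithin t1 (Set.Iio t1), r ∈ Set.Iio t1 :=
            self_mem_nhdsWithin
          have h2 : ∀ᶠ r in nhdsWithin t1 (Set.Iio t1), 0 < r :=
            Filter.Eventually.filter_mono nhdsWithin_le_nhds
              (isOpen_Ioi.eventually_mem (Set.mem_Ioi.mpr ht1pos))
          exact h2.and h1
        constructor
        · exact ge_of_tendsto htd (hevp.mono fun r hr => (hpre r hr.1.le hr.2 i).le)
        · exact le_of_tendsto htd (hevp.mono fun r hr =>
            hMB (x r) (hpre r hr.1.le hr.2) (hclass r hr.1.le) i)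
    have hex : ∃ i0, x t1 i0 ≤ 0 := by
      by_contra h
      push_neg at h
      have hev : ∀ᶠ s in nhds t1, ∀ i, 0 < x s i := by
        rw [Filter.eventually_all]
        intro i
        exact Filter.Tendsto.eventually_const_lt (h i) (hcoordCont i t1 ht1nn)
      obtain ⟨ε, hε, hball⟩ := Metric.eventually_nhds_iff.mp hev
      have hlb : ∀ t ∈ bad, t1 + ε ≤ t := by
        intro t ht
        by_contra hlt
        push_neg at hlt
        have htge : t1 ≤ t := csInf_le hbb ht
        have hd : dist t t1 < ε := by
          rw [Real.dist_eq, abs_of_nonneg (by linarith)]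
          linarith
        obtain ⟨i, hi⟩ := ht.2
        exact absurd (hball hd i) (not_lt.mpr hi)
      have hge := le_csInf hne hlb
      linarith
    obtain ⟨i0, hi0⟩ := hex
    have hgpos : 0 < x t1 i0 := by
      apply WED.pos_of_deriv_ge (g := fun s => x s i0)
        (g' := fun s => massActionField E k (x s) i0)
        (C := ∑ e ∈ E, k e * M ^ (∑ j, e.1 j) * (e.1 i0 : ℝ)) ht1pos
      · intro s hs
        exact hcoord i0 s hs.1
      · intro s hs
        have hb := hbnd s hs.1 hs.2
        exact WED.field_coord_lb E k hk M hM1 (x s) (fun j => (hb j).1)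
          (fun j => (hb j).2) i0
      · show 0 < x 0 i0
        rw [hx0eq]; exact hx0 i0
    exact absurd hgpos (not_lt.mpr hi0)
  -- main Lyapunov argument
  by_contra hcon
  push_neg at hcon
  have hbound : ∀ᶠ t in Filter.atTop, ∀ i, 0 < x t i ∧ x t i ≤ M := by
    filter_upwards [Filter.eventually_ge_atTop (0:ℝ)] with t ht
    exact fun i => ⟨hpos t ht i, hMB (x t) (hpos t ht) (hclass t ht) i⟩
  set L : Fin n → ℝ := fun i => Filter.liminf (fun t => x t i) Filter.atTop with hL
  have hBU : ∀ i, Filter.IsBoundedUnder (· ≤ ·) Filter.atTop (fun t => x t i) :=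
    fun i => Filter.isBoundedUnder_of_eventually_le (hbound.mono fun t ht => (ht i).2)
  have hBL : ∀ i, Filter.IsBoundedUnder (· ≥ ·) Filter.atTop (fun t => x t i) :=
    fun i => Filter.isBoundedUnder_of_eventually_ge (hbound.mono fun t ht => (ht i).1.le)
  have hLnn : ∀ i, 0 ≤ L i := fun i =>
    Filter.le_liminf_of_le ((hBU i).isCoboundedUnder_flip)
      (hbound.mono fun t ht => (ht i).1.le)
  have hLpos : ∀ i, 0 < L i := fun i => (hLnn i).lt_of_ne (Ne.symm (hcon i))
  have hevL : ∀ᶠ t in Filter.atTop, ∀ i, L i / 2 < x t i := by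
    rw [Filter.eventually_all]
    intro i
    exact Filter.eventually_lt_of_lt_liminf (half_lt_self (hLpos i)) (hBL i)
  set ε := ∏ i, (L i / 2) ^ (e0.1 i) with hε
  have hεpos : 0 < ε := Finset.prod_pos fun i _ => pow_pos (half_pos (hLpos i)) _
  obtain ⟨T, hT⟩ := Filter.eventually_atTop.mp (hevL.and (Filter.eventually_ge_atTop 0))
  set s0 := ∑ i, w i * reactionVector e0 i with hs0
  have hs0neg : s0 < 0 := hw2
  have hk0 := hk e0 he0
  set δ := k e0 * ε * (-s0) with hδ
  have hδpos : 0 < δ := by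
    apply mul_pos (mul_pos hk0 hεpos); linarith
  set V : ℝ → ℝ := fun t => ∑ i, w i * x t i with hV
  have hVd : ∀ t, 0 ≤ t →
      HasDerivAt V (∑ i, w i * massActionField E k (x t) i) t := by
    intro t ht
    apply HasDerivAt.fun_sum
    intro i _
    exact (hcoord i t ht).const_mul (w i)
  have hVd' : ∀ t, T ≤ t → ∑ i, w i * massActionField E k (x t) i ≤ -δ := by
    intro t ht
    obtain ⟨hL2, ht0⟩ := hT t ht
    have hposx := hpos t ht0
    rw [WED.sum_w_field]
    have hsplit : ∑ e ∈ E, (k e * ∏ j, x t j ^ e.1 j) * (∑ i, w i * reactionVector e i)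
        = (k e0 * ∏ j, x t j ^ e0.1 j) * s0
          + ∑ e ∈ E.erase e0, (k e * ∏ j, x t j ^ e.1 j)
              * (∑ i, w i * reactionVector e i) := by
      rw [← Finset.add_sum_erase _ _ he0]
    rw [hsplit]
    have hrest : ∑ e ∈ E.erase e0, (k e * ∏ j, x t j ^ e.1 j)
        * (∑ i, w i * reactionVector e i) ≤ 0 := by
      apply Finset.sum_nonpos
      intro e he
      have heE := Finset.mem_of_mem_erase he
      apply mul_nonpos_of_nonneg_of_nonpos
      · exact mul_nonneg (hk e heE).le
          (Finset.prod_nonneg fun j _ => pow_nonneg (hposx j).le _)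
      · exact hw1 e heE
    have hmain : (k e0 * ∏ j, x t j ^ e0.1 j) * s0 ≤ (k e0 * ε) * s0 := by
      apply mul_le_mul_of_nonpos_right _ hs0neg.le
      apply mul_le_mul_of_nonneg_left _ hk0.le
      rw [hε]
      apply Finset.prod_le_prod
      · intro i _; exact pow_nonneg (half_pos (hLpos i)).le _
      · intro i _; exact pow_le_pow_left₀ (half_pos (hLpos i)).le (hL2 i).le _
    have hsum0 : (k e0 * ε) * s0 = -δ := by rw [hδ]; ring
    linarith
  have hVlb : ∀ t, 0 ≤ t → -((∑ i, |w i|) * M) ≤ V t := by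
    intro t ht
    have hterm : ∀ i ∈ Finset.univ, -(|w i| * M) ≤ w i * x t i := by
      intro i _
      have h1 : |w i * x t i| ≤ |w i| * M := by
        rw [abs_mul]
        apply mul_le_mul_of_nonneg_left _ (abs_nonneg _)
        rw [abs_of_pos (hpos t ht i)]
        exact hMB (x t) (hpos t ht) (hclass t ht) i
      have h2 := neg_abs_le (w i * x t i)
      linarith
    calc -((∑ i, |w i|) * M) = ∑ i, -(|w i| * M) := by
          rw [Finset.sum_mul, ← Finset.sum_neg_distrib]
      _ ≤ ∑ i, w i * x t i := Finset.sum_le_sum hterm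
      _ = V t := rfl
  have hT0 : 0 ≤ T := (hT T le_rfl).2
  set t2 := T + (V T + (∑ i, |w i|) * M + 1) / δ with ht2
  have hnum : 0 ≤ V T + (∑ i, |w i|) * M + 1 := by
    have := hVlb T hT0
    linarith
  have ht2T : T ≤ t2 := by
    rw [ht2]
    exact le_add_of_nonneg_right (div_nonneg hnum hδpos.le)
  have hkey := WED.le_of_deriv_le ht2T
      (fun s hs => hVd s (le_trans hT0 hs.1))
      (fun s hs => hVd' s hs.1)
  have hδt : δ * (t2 - T) = V T + (∑ i, |w i|) * M + 1 := by
    rw [ht2]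
    field_simp
    ring
  have hfin := hVlb t2 (le_trans hT0 ht2T)
  rw [hδt] at hkey
  linarith
end
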